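/- Let b > 0, a > 0, m ∈ ℕ, and let ŵ_0,…,ŵ_m be nonnegative reals with ŵ_0 > 0 and ∑_{k=0}^m ŵ_k = 1. Define L(λ) = b·∑_{k=0}^m ŵ_k e^{-kaλ} and R(λ) = aλ/(1-e^{-aλ}) (with R(0)=1). Then the equation L(λ) = R(λ) has exactly one real solution λ. Moreover the solution satisfies λ > 0 if b > 1, λ = 0 if b = 1, and λ < 0 if b < 1. -/

import Mathlib

open Real Set

noncomputable def Haux : ℝ → ℝ := fun x => if x = 0 then 1 else (1 - Real.exp (-x)) / x

lemma Haux_zero : Haux 0 = 1 := by simp [Haux]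

lemma Haux_ne_zero (x : ℝ) (hx : x ≠ 0) : Haux x = (1 - Real.exp (-x)) / x := by
  simp [Haux, hx]

lemma key_lt (x : ℝ) (hx : x ≠ 0) : 1 - Real.exp (-x) < x := by
  have := Real.add_one_lt_exp (neg_ne_zero.mpr hx); linarith

lemma Haux_pos (x : ℝ) : 0 < Haux x := by
  rcases lt_trichotomy x 0 with h | h | h
  · rw [Haux_ne_zero x h.ne]
    apply div_pos_of_neg_of_neg _ h
    have : 1 < Real.exp (-x) := Real.one_lt_exp_iff.mpr (by linarith)
    linarith
  · simp [h, Haux]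
  · rw [Haux_ne_zero x h.ne']
    apply div_pos _ h
    have : Real.exp (-x) < 1 := Real.exp_lt_one_iff.mpr (by linarith)
    linarith

lemma Haux_lt_one (x : ℝ) (hx : 0 < x) : Haux x < 1 := by
  rw [Haux_ne_zero x hx.ne', div_lt_one hx]; exact key_lt x hx.ne'

lemma one_lt_Haux (x : ℝ) (hx : x < 0) : 1 < Haux x := by
  rw [Haux_ne_zero x hx.ne, one_lt_div_of_neg hx]; exact key_lt x hx.ne

lemma hasDerivAt_aux (x : ℝ) : HasDerivAt (fun y => 1 - Real.exp (-y)) (Real.exp (-x)) x := by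
  have h1 : HasDerivAt (fun y : ℝ => Real.exp (-y)) (-Real.exp (-x)) x := by
    exact ((Real.hasDerivAt_exp (-x)).comp x ((hasDerivAt_id x).neg)).congr_deriv (by simp)
  exact ((hasDerivAt_const x (1:ℝ)).sub h1).congr_deriv (by simp)

lemma Haux_contAt_zero : ContinuousAt Haux 0 := by
  have hd : HasDerivAt (fun y => 1 - Real.exp (-y)) 1 0 := by simpa using hasDerivAt_aux 0
  have hslope := hasDerivAt_iff_tendsto_slope.mp hd
  have heq : ∀ y ∈ ({(0:ℝ)}ᶜ : Set ℝ), slope (fun y => 1 - Real.exp (-y)) 0 y = Haux y := by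
    intro y hy
    have hy' : y ≠ 0 := hy
    simp [slope_def_field, Haux_ne_zero y hy']
  rw [ContinuousAt, Haux_zero, ← nhdsNE_sup_pure 0]
  rw [Filter.tendsto_sup]
  constructor
  · exact hslope.congr' (by filter_upwards [self_mem_nhdsWithin] using heq)
  · simpa [Haux_zero] using tendsto_pure_nhds Haux 0

lemma Haux_eventually_eq (x : ℝ) (hx : x ≠ 0) :
    (fun y => (1 - Real.exp (-y)) / y) =ᶠ[nhds x] Haux := by
  filter_upwards [isOpen_compl_singleton.mem_nhds hx] with y hy
  exact (Haux_ne_zero y hy).symm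

lemma Haux_continuous : Continuous Haux := by
  rw [continuous_iff_continuousAt]
  intro x
  by_cases hx : x = 0
  · subst hx; exact Haux_contAt_zero
  · have : ContinuousAt (fun y => (1 - Real.exp (-y)) / y) x := by
      apply ContinuousAt.div
      · exact (continuous_const.sub (Real.continuous_exp.comp continuous_neg)).continuousAt
      · exact continuousAt_id
      · exact hx
    exact this.congr (Haux_eventually_eq x hx)

lemma Haux_hasDeriv (x : ℝ) (hx : x ≠ 0) :
    HasDerivAt Haux ((Real.exp (-x) * x - (1 - Real.exp (-x))) / x ^ 2) x := by
  have := (hasDerivAt_aux x).div (hasDerivAt_id x) hx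
  simpa using this.congr_of_eventuallyEq (Haux_eventually_eq x hx).symm

lemma Haux_deriv_neg (x : ℝ) (hx : x ≠ 0) : deriv Haux x < 0 := by
  rw [(Haux_hasDeriv x hx).deriv]
  apply div_neg_of_neg_of_pos _ (by positivity)
  have h1 : x + 1 < Real.exp x := Real.add_one_lt_exp hx
  have h2 : Real.exp (-x) * (x + 1) < Real.exp (-x) * Real.exp x :=
    mul_lt_mul_of_pos_left h1 (Real.exp_pos _)
  rw [← Real.exp_add] at h2
  simp at h2
  nlinarith

lemma Haux_strictAnti : StrictAnti Haux := by
  have h1 : StrictAntiOn Haux (Ici 0) := by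
    apply strictAntiOn_of_deriv_neg (convex_Ici 0) Haux_continuous.continuousOn
    intro x hx
    rw [interior_Ici] at hx
    exact Haux_deriv_neg x (ne_of_gt hx)
  have h2 : StrictAntiOn Haux (Iic 0) := by
    apply strictAntiOn_of_deriv_neg (convex_Iic 0) Haux_continuous.continuousOn
    intro x hx
    rw [interior_Iic] at hx
    exact Haux_deriv_neg x (ne_of_lt hx)
  intro x y hxy
  rcases le_or_gt 0 x with h | h
  · exact h1 h (le_trans h hxy.le) hxy
  · rcases le_or_gt y 0 with h' | h'
    · exact h2 (Set.mem_Iic.mpr (hxy.le.trans h')) (Set.mem_Iic.mpr h') hxy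
    · calc Haux y < Haux 0 := h1 (Set.mem_Ici.mpr le_rfl) (Set.mem_Ici.mpr h'.le) h'
        _ < Haux x := h2 (Set.mem_Iic.mpr h.le) (Set.mem_Iic.mpr le_rfl) h

theorem characteristic_equation_unique_root
    (b a : ℝ) (hb : 0 < b) (ha : 0 < a) (m : ℕ) (w : ℕ → ℝ)
    (hw : ∀ k, k ≤ m → 0 ≤ w k) (hw0 : 0 < w 0)
    (hwsum : ∑ k ∈ Finset.range (m + 1), w k = 1)
    (L R : ℝ → ℝ)
    (hL : ∀ l : ℝ, L l = b * ∑ k ∈ Finset.range (m + 1),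
        w k * Real.exp (-(k : ℝ) * a * l))
    (hR : ∀ l : ℝ, l ≠ 0 → R l = a * l / (1 - Real.exp (-(a * l))))
    (hR0 : R 0 = 1) :
    (∃! l : ℝ, L l = R l) ∧
    ∀ l : ℝ, L l = R l →
      ((1 < b → 0 < l) ∧ (b = 1 → l = 0) ∧ (b < 1 → l < 0)) := by
  -- R in terms of Haux
  have hRval : ∀ l, R l = (Haux (a * l))⁻¹ := by
    intro l
    by_cases hl : l = 0
    · simp [hl, hR0, Haux_zero]
    · have hal : a * l ≠ 0 := mul_ne_zero ha.ne' hl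
      rw [hR l hl, Haux_ne_zero _ hal, inv_div]
  have hRmono : StrictMono R := by
    intro x y hxy
    rw [hRval x, hRval y]
    exact inv_strictAnti₀ (Haux_pos _)
      (Haux_strictAnti (mul_lt_mul_of_pos_left hxy ha))
  have hLanti : Antitone L := by
    intro x y hxy
    rw [hL x, hL y]
    apply mul_le_mul_of_nonneg_left _ hb.le
    apply Finset.sum_le_sum
    intro k hk
    apply mul_le_mul_of_nonneg_left _ (hw k (Finset.mem_range_succ_iff.mp hk))
    apply Real.exp_le_exp.mpr
    have hk0 : (0:ℝ) ≤ (k:ℝ) := Nat.cast_nonneg k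
    have := mul_le_mul_of_nonneg_left hxy (mul_nonneg hk0 ha.le)
    nlinarith [this]
  set F : ℝ → ℝ := fun l => R l - L l with hF
  have hFmono : StrictMono F := by
    intro x y hxy
    have := hRmono hxy
    have := hLanti hxy.le
    simp only [hF]
    linarith
  -- bounds on L
  have hLlb : ∀ l, b * w 0 ≤ L l := by
    intro l
    rw [hL l]
    apply mul_le_mul_of_nonneg_left _ hb.le
    calc w 0 = w 0 * Real.exp (-(0:ℕ) * a * l) := by simp
      _ ≤ _ := by
        apply Finset.single_le_sum (f := fun k => w k * Real.exp (-(k:ℝ) * a * l))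
          (fun k hk => mul_nonneg (hw k (Finset.mem_range_succ_iff.mp hk)) (Real.exp_pos _).le)
          (Finset.mem_range.mpr (Nat.succ_pos m))
  have hLub : ∀ l, 0 ≤ l → L l ≤ b := by
    intro l hl
    rw [hL l]
    calc b * ∑ k ∈ Finset.range (m + 1), w k * Real.exp (-(k:ℝ) * a * l)
        ≤ b * ∑ k ∈ Finset.range (m + 1), w k := by
          apply mul_le_mul_of_nonneg_left _ hb.le
          apply Finset.sum_le_sum
          intro k hk
          have : Real.exp (-(k:ℝ) * a * l) ≤ 1 := by
            apply Real.exp_le_one_iff.mpr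
            have hk0 : (0:ℝ) ≤ (k:ℝ) := Nat.cast_nonneg k
            nlinarith [mul_nonneg (mul_nonneg hk0 ha.le) hl]
          nlinarith [hw k (Finset.mem_range_succ_iff.mp hk)]
      _ = b := by rw [hwsum, mul_one]
  -- positive point
  set l₁ : ℝ := (b + 1) / a with hl₁def
  have hl₁pos : 0 < l₁ := div_pos (by linarith) ha
  have hal₁ : a * l₁ = b + 1 := by rw [hl₁def]; field_simp
  clear_value l₁
  have hFl₁ : 0 < F l₁ := by
    have hRl₁ : b + 1 < R l₁ := by
      rw [hR l₁ hl₁pos.ne', hal₁]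
      have he : 0 < 1 - Real.exp (-(b+1)) := by
        have : Real.exp (-(b+1)) < 1 := Real.exp_lt_one_iff.mpr (by linarith)
        linarith
      rw [lt_div_iff₀ he]
      have : 0 < Real.exp (-(b+1)) := Real.exp_pos _
      nlinarith
    have := hLub l₁ hl₁pos.le
    simp only [hF]
    linarith
  -- negative point
  set t₀ : ℝ := 2 / (b * w 0) + 1 with ht₀def
  have hbw : 0 < b * w 0 := mul_pos hb hw0
  have ht₀pos : 0 < t₀ := by positivity
  set l₀ : ℝ := -(t₀ / a) with hl₀def
  have hl₀neg : l₀ < 0 := by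
    rw [hl₀def]; simp only [neg_neg, neg_lt, neg_zero]; positivity
  have hal₀ : a * l₀ = -t₀ := by rw [hl₀def]; field_simp
  clear_value l₀ t₀
  have hFl₀ : F l₀ < 0 := by
    have hexp : 1 + t₀ + t₀ ^ 2 / 2 ≤ Real.exp t₀ := by
      have := Real.sum_le_exp_of_nonneg ht₀pos.le 3
      simp [Finset.sum_range_succ, Nat.factorial] at this
      nlinarith
    have hRl₀ : R l₀ ≤ 2 / t₀ := by
      rw [hR l₀ hl₀neg.ne, hal₀, neg_neg]
      have hsq : 0 < t₀ * t₀ := mul_pos ht₀pos ht₀pos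
      have hdenpos : 0 < Real.exp t₀ - 1 := by nlinarith [hsq]
      have heq : -t₀ / (1 - Real.exp t₀) = t₀ / (Real.exp t₀ - 1) := by
        rw [div_eq_div_iff (by linarith) (by linarith)]; ring
      rw [heq, div_le_div_iff₀ hdenpos ht₀pos]
      nlinarith [hsq, hexp, ht₀pos]
    have h2t : 2 / t₀ < b * w 0 := by
      have hkey : b * w 0 * t₀ = 2 + b * w 0 := by
        rw [ht₀def, mul_add, mul_one, mul_div_cancel₀ _ hbw.ne']
      rw [div_lt_iff₀ ht₀pos]
      nlinarith
    have := hLlb l₀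
    simp only [hF]
    linarith
  -- continuity
  have hRcont : Continuous R := by
    have : R = fun l => (Haux (a * l))⁻¹ := funext hRval
    rw [this]
    apply Continuous.inv₀
    · exact Haux_continuous.comp (continuous_const.mul continuous_id)
    · intro x; exact (Haux_pos _).ne'
  have hLcont : Continuous L := by
    have : L = fun l => b * ∑ k ∈ Finset.range (m + 1),
        w k * Real.exp (-(k : ℝ) * a * l) := funext hL
    rw [this]
    apply continuous_const.mul
    apply continuous_finset_sum
    intro k _
    exact continuous_const.mul (Real.continuous_exp.comp (by continuity))
  have hFcont : Continuous F := hRcont.sub hLcont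
  -- existence via IVT
  have hl₀l₁ : l₀ ≤ l₁ := le_of_lt (hl₀neg.trans hl₁pos)
  have hivt := intermediate_value_Icc hl₀l₁ hFcont.continuousOn
  have h0mem : (0:ℝ) ∈ Set.Icc (F l₀) (F l₁) := ⟨hFl₀.le, hFl₁.le⟩
  obtain ⟨lr, _, hlr⟩ := hivt h0mem
  have hroot : L lr = R lr := by simp only [hF] at hlr; linarith
  -- F 0 = 1 - b
  have hL0 : L 0 = b := by
    rw [hL 0]
    simp [Real.exp_zero, hwsum]
  have hF0 : F 0 = 1 - b := by simp only [hF]; rw [hR0, hL0]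
  have hsign : ∀ l : ℝ, L l = R l →
      ((1 < b → 0 < l) ∧ (b = 1 → l = 0) ∧ (b < 1 → l < 0)) := by
    intro l hl'
    have hFl : F l = 0 := by simp only [hF]; linarith
    refine ⟨fun h1 => ?_, fun h1 => ?_, fun h1 => ?_⟩
    · by_contra hc
      push_neg at hc
      have := hFmono.le_iff_le.mpr hc
      rw [hFl, hF0] at this
      linarith
    · have : F l = F 0 := by rw [hFl, hF0, h1]; ring
      exact hFmono.injective this
    · by_contra hc
      push_neg at hc
      have := hFmono.le_iff_le.mpr hc
      rw [hFl, hF0] at this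
      linarith
  refine ⟨⟨lr, hroot, ?_⟩, hsign⟩
  intro y hy
  have h1 : F y = 0 := by simp only [hF]; linarith
  have h2 : F lr = 0 := by simp only [hF]; linarith [hroot]
  exact hFmono.injective (by rw [h1, h2])
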